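/- Existence of a deterministic global minimizer: suppose every entry of the channel matrix A is strictly positive and the functions f (on the simplex) and each g_k (on [0,1]) are continuous as well as concave. Then the minimum of J over the compact set of row-stochastic matrices is attained, and it is attained at a deterministic quantizer Q* (each row of Q* is a standard basis vector). -/

import Mathlib

def simplex (N : ℕ) : Set (Fin N → ℝ) := {q | (∀ n, 0 ≤ q n) ∧ ∑ n, q n = 1}

/-- `f` is concave on the standard probability simplex. -/
def ConcaveOnSimplex {N : ℕ} (f : (Fin N → ℝ) → ℝ) : Prop :=
  ∀ a ∈ simplex N, ∀ b ∈ simplex N, ∀ lam : ℝ, lam ∈ Set.Icc (0:ℝ) 1 →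
    lam * f a + (1 - lam) * f b ≤ f (lam • a + (1 - lam) • b)

/-- The impurity functional `F(v) = (∑ n, v n) * f (v / ∑ n, v n)`. -/
noncomputable def impurity {N : ℕ} (f : (Fin N → ℝ) → ℝ) (v : Fin N → ℝ) : ℝ :=
  (∑ n, v n) * f (fun n => v n / ∑ m, v m)

/-- A joint distribution on `Fin N × Fin M`. -/
def IsJointDist {N M : ℕ} (p : Fin N → Fin M → ℝ) : Prop :=
  (∀ n m, 0 ≤ p n m) ∧ ∑ n, ∑ m, p n m = 1

/-- A row-stochastic matrix. -/
def RowStochastic {M K : ℕ} (Q : Fin M → Fin K → ℝ) : Prop :=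
  (∀ m k, 0 ≤ Q m k) ∧ ∀ m, ∑ k, Q m k = 1

/-- Marginal of the data `Y`: `p_{Y_m} = ∑ n, p n m`. -/
noncomputable def pY {N M : ℕ} (p : Fin N → Fin M → ℝ) (m : Fin M) : ℝ := ∑ n, p n m

/-- Joint distribution of the source and the quantizer output. -/
noncomputable def pXZ {N M K : ℕ} (p : Fin N → Fin M → ℝ) (Q : Fin M → Fin K → ℝ)
    (n : Fin N) (k : Fin K) : ℝ := ∑ m, p n m * Q m k

/-- Marginal of the quantizer output. -/
noncomputable def pZ {N M K : ℕ} (p : Fin N → Fin M → ℝ) (Q : Fin M → Fin K → ℝ)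
    (k : Fin K) : ℝ := ∑ n, pXZ p Q n k

/-- Joint distribution of the source and the channel output. -/
noncomputable def pXT {N M K H : ℕ} (p : Fin N → Fin M → ℝ) (Q : Fin M → Fin K → ℝ)
    (A : Fin K → Fin H → ℝ) (n : Fin N) (h : Fin H) : ℝ := ∑ k, pXZ p Q n k * A k h

/-- The objective `J(Q) = β ∑_h F(p_{XT}(·,h)) + ∑_k g_k(p_Z(k))`. -/
noncomputable def J {N M K H : ℕ} (β : ℝ) (f : (Fin N → ℝ) → ℝ) (g : Fin K → ℝ → ℝ)
    (p : Fin N → Fin M → ℝ) (A : Fin K → Fin H → ℝ) (Q : Fin M → Fin K → ℝ) : ℝ :=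
  β * ∑ h, impurity f (fun n => pXT p Q A n h) + ∑ k, g k (pZ p Q k)

/-- A deterministic (hard) quantizer. -/
def Deterministic {M K : ℕ} (Q : Fin M → Fin K → ℝ) : Prop :=
  ∀ m, ∃ k, Q m k = 1 ∧ ∀ k', k' ≠ k → Q m k' = 0

section Aux

open Finset

variable {N M K H : ℕ}

/-- The impurity functional is concave on the nonnegative orthant. -/
lemma impurity_concaveOn (f : (Fin N → ℝ) → ℝ) (hf : ConcaveOnSimplex f) :
    ConcaveOn ℝ {v : Fin N → ℝ | ∀ n, 0 ≤ v n} (impurity f) := by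
  constructor
  · intro u hu v hv a b ha hb hab n
    have := add_nonneg (mul_nonneg ha (hu n)) (mul_nonneg hb (hv n))
    simpa using this
  · intro u hu v hv a b ha hb hab
    set s : ℝ := ∑ n, u n with hs_def
    set t : ℝ := ∑ n, v n with ht_def
    have hs : 0 ≤ s := Finset.sum_nonneg fun n _ => hu n
    have ht : 0 ≤ t := Finset.sum_nonneg fun n _ => hv n
    have hsumcomb : ∑ n, (a • u + b • v) n = a * s + b * t := by
      simp only [Pi.add_apply, Pi.smul_apply, smul_eq_mul]
      rw [Finset.sum_add_distrib, ← Finset.mul_sum, ← Finset.mul_sum]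
    have hT : 0 ≤ a * s + b * t := add_nonneg (mul_nonneg ha hs) (mul_nonneg hb ht)
    rcases hT.eq_or_lt with hT0 | hTpos
    · -- total mass zero: everything vanishes
      have has : a * s = 0 := by nlinarith [mul_nonneg ha hs, mul_nonneg hb ht]
      have hbt : b * t = 0 := by nlinarith [mul_nonneg ha hs, mul_nonneg hb ht]
      have h1 : impurity f (a • u + b • v) = 0 := by
        rw [impurity, hsumcomb, ← hT0]; ring
      have h2 : a • impurity f u = 0 := by
        rw [impurity, smul_eq_mul, ← hs_def, ← mul_assoc, has, zero_mul]
      have h3 : b • impurity f v = 0 := by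
        rw [impurity, smul_eq_mul, ← ht_def, ← mul_assoc, hbt, zero_mul]
      rw [h1, h2, h3, add_zero]
    · rcases eq_or_lt_of_le hs with hs0 | hspos
      · -- `u = 0`
        have hu0 : ∀ n, u n = 0 := by
          intro n
          have := (Finset.sum_eq_zero_iff_of_nonneg (fun n _ => hu n)).mp hs0.symm
          exact this n (Finset.mem_univ n)
        have hcombeq : a • u + b • v = b • v := by
          funext n; simp [hu0 n]
        have hbt : 0 < b * t := by
          have : a * s = 0 := by rw [← hs0]; ring
          linarith [hTpos, this]
        have hb' : 0 < b := by
          rcases hb.eq_or_lt with h | h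
          · exfalso; rw [← h] at hbt; simp at hbt
          · exact h
        have ht' : 0 < t := by nlinarith
        have hsum_bv : ∑ n, (b • v) n = b * t := by
          simp only [Pi.smul_apply, smul_eq_mul]
          rw [← Finset.mul_sum]
        have hratio : (fun n => (b • v) n / (b * t)) =
            (fun n => v n / ∑ m', v m') := by
          funext n
          simp only [Pi.smul_apply, smul_eq_mul, ← ht_def]
          rw [mul_div_mul_left _ _ (ne_of_gt hb')]
        have h1 : impurity f (a • u + b • v) = b * impurity f v := by
          rw [hcombeq, impurity, hsum_bv, hratio, impurity, ← ht_def]; ring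
        have h2 : a • impurity f u = 0 := by
          have : s * f (fun n => u n / ∑ m', u m') = 0 := by rw [← hs0]; ring
          rw [impurity, smul_eq_mul, ← hs_def, this, mul_zero]
        rw [h1, h2, zero_add, smul_eq_mul]
      · rcases eq_or_lt_of_le ht with ht0 | htpos
        · -- `v = 0`, symmetric
          have hv0 : ∀ n, v n = 0 := by
            intro n
            have := (Finset.sum_eq_zero_iff_of_nonneg (fun n _ => hv n)).mp ht0.symm
            exact this n (Finset.mem_univ n)
          have hcombeq : a • u + b • v = a • u := by
            funext n; simp [hv0 n]
          have has : 0 < a * s := by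
            have : b * t = 0 := by rw [← ht0]; ring
            linarith [hTpos, this]
          have ha' : 0 < a := by
            rcases ha.eq_or_lt with h | h
            · exfalso; rw [← h] at has; simp at has
            · exact h
          have hsum_au : ∑ n, (a • u) n = a * s := by
            simp only [Pi.smul_apply, smul_eq_mul]
            rw [← Finset.mul_sum]
          have hratio : (fun n => (a • u) n / (a * s)) =
              (fun n => u n / ∑ m', u m') := by
            funext n
            simp only [Pi.smul_apply, smul_eq_mul, ← hs_def]
            rw [mul_div_mul_left _ _ (ne_of_gt ha')]
          have h1 : impurity f (a • u + b • v) = a * impurity f u := by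
            rw [hcombeq, impurity, hsum_au, hratio, impurity, ← hs_def]; ring
          have h2 : b • impurity f v = 0 := by
            have : t * f (fun n => v n / ∑ m', v m') = 0 := by rw [← ht0]; ring
            rw [impurity, smul_eq_mul, ← ht_def, this, mul_zero]
          rw [h1, h2, add_zero, smul_eq_mul]
        · -- main case : `s > 0`, `t > 0`
          set T : ℝ := a * s + b * t with hTdef
          set uh : Fin N → ℝ := fun n => u n / s with huh_def
          set vh : Fin N → ℝ := fun n => v n / t with hvh_def
          have huh_mem : uh ∈ simplex N := by
            constructor
            · intro n; exact div_nonneg (hu n) hs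
            · rw [← Finset.sum_div, ← hs_def, div_self (ne_of_gt hspos)]
          have hvh_mem : vh ∈ simplex N := by
            constructor
            · intro n; exact div_nonneg (hv n) ht
            · rw [← Finset.sum_div, ← ht_def, div_self (ne_of_gt htpos)]
          set lam : ℝ := a * s / T with hlam_def
          have hTne : T ≠ 0 := ne_of_gt hTpos
          have hlam0 : 0 ≤ lam := div_nonneg (mul_nonneg ha hs) (le_of_lt hTpos)
          have hlam1 : lam ≤ 1 := by
            rw [hlam_def, div_le_one hTpos]
            nlinarith [mul_nonneg hb ht]
          have hlam' : 1 - lam = b * t / T := by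
            rw [hlam_def, eq_div_iff hTne, sub_mul, div_mul_cancel₀ _ hTne, hTdef]; ring
          have hkey := hf uh huh_mem vh hvh_mem lam ⟨hlam0, hlam1⟩
          have hpt : (fun n => (a • u + b • v) n / T) =
              lam • uh + (1 - lam) • vh := by
            funext n
            simp only [Pi.add_apply, Pi.smul_apply, smul_eq_mul, hlam', hlam_def,
              huh_def, hvh_def]
            field_simp
            ring
          have hmain : impurity f (a • u + b • v) = T * f (lam • uh + (1 - lam) • vh) := by
            rw [impurity, hsumcomb, hpt]
          have hineq : T * (lam * f uh + (1 - lam) * f vh) ≤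
              T * f (lam • uh + (1 - lam) • vh) :=
            mul_le_mul_of_nonneg_left hkey (le_of_lt hTpos)
          have hexp : T * (lam * f uh + (1 - lam) * f vh) =
              a * impurity f u + b * impurity f v := by
            rw [impurity, impurity, ← hs_def, ← ht_def, hlam', hlam_def, huh_def, hvh_def]
            field_simp
          rw [hmain]
          calc a • impurity f u + b • impurity f v
              = T * (lam * f uh + (1 - lam) * f vh) := by
                rw [smul_eq_mul, smul_eq_mul, hexp]
            _ ≤ T * f (lam • uh + (1 - lam) • vh) := hineq

lemma pXZ_comb (p : Fin N → Fin M → ℝ) (Q1 Q2 : Fin M → Fin K → ℝ) (a b : ℝ)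
    (n : Fin N) (k : Fin K) :
    pXZ p (a • Q1 + b • Q2) n k = a * pXZ p Q1 n k + b * pXZ p Q2 n k := by
  simp only [pXZ, Pi.add_apply, Pi.smul_apply, smul_eq_mul, Finset.mul_sum]
  rw [← Finset.sum_add_distrib]
  apply Finset.sum_congr rfl
  intro m _
  ring

lemma pXT_comb (p : Fin N → Fin M → ℝ) (Q1 Q2 : Fin M → Fin K → ℝ)
    (A : Fin K → Fin H → ℝ) (a b : ℝ) (n : Fin N) (h : Fin H) :
    pXT p (a • Q1 + b • Q2) A n h = a * pXT p Q1 A n h + b * pXT p Q2 A n h := by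
  simp only [pXT, Finset.mul_sum]
  rw [← Finset.sum_add_distrib]
  apply Finset.sum_congr rfl
  intro k _
  rw [pXZ_comb]
  ring

lemma pZ_comb (p : Fin N → Fin M → ℝ) (Q1 Q2 : Fin M → Fin K → ℝ) (a b : ℝ)
    (k : Fin K) :
    pZ p (a • Q1 + b • Q2) k = a * pZ p Q1 k + b * pZ p Q2 k := by
  simp only [pZ, Finset.mul_sum]
  rw [← Finset.sum_add_distrib]
  apply Finset.sum_congr rfl
  intro n _
  rw [pXZ_comb]

lemma pXZ_nonneg (p : Fin N → Fin M → ℝ) (hp : IsJointDist p)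
    (Q : Fin M → Fin K → ℝ) (hQ : RowStochastic Q) (n : Fin N) (k : Fin K) :
    0 ≤ pXZ p Q n k :=
  Finset.sum_nonneg fun m _ => mul_nonneg (hp.1 n m) (hQ.1 m k)

lemma pXT_nonneg (p : Fin N → Fin M → ℝ) (hp : IsJointDist p)
    (Q : Fin M → Fin K → ℝ) (hQ : RowStochastic Q)
    (A : Fin K → Fin H → ℝ) (hA : ∀ k h, 0 ≤ A k h) (n : Fin N) (h : Fin H) :
    0 ≤ pXT p Q A n h :=
  Finset.sum_nonneg fun k _ => mul_nonneg (pXZ_nonneg p hp Q hQ n k) (hA k h)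

lemma pZ_mem_Icc (p : Fin N → Fin M → ℝ) (hp : IsJointDist p)
    (Q : Fin M → Fin K → ℝ) (hQ : RowStochastic Q) (k : Fin K) :
    pZ p Q k ∈ Set.Icc (0:ℝ) 1 := by
  constructor
  · exact Finset.sum_nonneg fun n _ => pXZ_nonneg p hp Q hQ n k
  · have hQle : ∀ m, Q m k ≤ 1 := by
      intro m
      calc Q m k ≤ ∑ k', Q m k' :=
            Finset.single_le_sum (fun k' _ => hQ.1 m k') (Finset.mem_univ k)
        _ = 1 := hQ.2 m
    calc pZ p Q k = ∑ n, ∑ m, p n m * Q m k := rfl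
      _ ≤ ∑ n, ∑ m, p n m := by
          apply Finset.sum_le_sum; intro n _
          apply Finset.sum_le_sum; intro m _
          calc p n m * Q m k ≤ p n m * 1 :=
                mul_le_mul_of_nonneg_left (hQle m) (hp.1 n m)
            _ = p n m := mul_one _
      _ = 1 := hp.2

lemma rowStochastic_convex :
    Convex ℝ {Q : Fin M → Fin K → ℝ | RowStochastic Q} := by
  intro Q1 h1 Q2 h2 a b ha hb hab
  constructor
  · intro m k
    have := add_nonneg (mul_nonneg ha (h1.1 m k)) (mul_nonneg hb (h2.1 m k))
    simpa using this
  · intro m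
    simp only [Pi.add_apply, Pi.smul_apply, smul_eq_mul]
    rw [Finset.sum_add_distrib, ← Finset.mul_sum, ← Finset.mul_sum, h1.2 m, h2.2 m]
    simpa using hab

lemma J_concaveOn (β : ℝ) (hβ : 0 ≤ β) (f : (Fin N → ℝ) → ℝ) (hf : ConcaveOnSimplex f)
    (g : Fin K → ℝ → ℝ) (hg : ∀ k, ConcaveOn ℝ (Set.Icc (0:ℝ) 1) (g k))
    (p : Fin N → Fin M → ℝ) (hp : IsJointDist p)
    (A : Fin K → Fin H → ℝ) (hA : ∀ k h, 0 ≤ A k h) :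
    ConcaveOn ℝ {Q : Fin M → Fin K → ℝ | RowStochastic Q} (J β f g p A) := by
  refine ⟨rowStochastic_convex, ?_⟩
  intro Q1 h1 Q2 h2 a b ha hb hab
  have himp : ∀ h : Fin H,
      a * impurity f (fun n => pXT p Q1 A n h) + b * impurity f (fun n => pXT p Q2 A n h)
        ≤ impurity f (fun n => pXT p (a • Q1 + b • Q2) A n h) := by
    intro h
    have hmem1 : (fun n => pXT p Q1 A n h) ∈ {v : Fin N → ℝ | ∀ n, 0 ≤ v n} :=
      fun n => pXT_nonneg p hp Q1 h1 A hA n h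
    have hmem2 : (fun n => pXT p Q2 A n h) ∈ {v : Fin N → ℝ | ∀ n, 0 ≤ v n} :=
      fun n => pXT_nonneg p hp Q2 h2 A hA n h
    have hconc := (impurity_concaveOn f hf).2 hmem1 hmem2 ha hb hab
    have heq : (fun n => pXT p (a • Q1 + b • Q2) A n h) =
        a • (fun n => pXT p Q1 A n h) + b • (fun n => pXT p Q2 A n h) := by
      funext n
      simp only [Pi.add_apply, Pi.smul_apply, smul_eq_mul]
      exact pXT_comb p Q1 Q2 A a b n h
    rw [heq]
    simpa using hconc
  have hgk : ∀ k : Fin K,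
      a * g k (pZ p Q1 k) + b * g k (pZ p Q2 k) ≤ g k (pZ p (a • Q1 + b • Q2) k) := by
    intro k
    have hconc := (hg k).2 (pZ_mem_Icc p hp Q1 h1 k) (pZ_mem_Icc p hp Q2 h2 k) ha hb hab
    have heq : pZ p (a • Q1 + b • Q2) k = a • pZ p Q1 k + b • pZ p Q2 k := by
      rw [smul_eq_mul, smul_eq_mul]; exact pZ_comb p Q1 Q2 a b k
    rw [heq]
    simpa using hconc
  have hS : a * (∑ h, impurity f (fun n => pXT p Q1 A n h))
      + b * (∑ h, impurity f (fun n => pXT p Q2 A n h))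
      ≤ ∑ h, impurity f (fun n => pXT p (a • Q1 + b • Q2) A n h) := by
    rw [Finset.mul_sum, Finset.mul_sum, ← Finset.sum_add_distrib]
    exact Finset.sum_le_sum fun h _ => himp h
  have hG : a * (∑ k, g k (pZ p Q1 k)) + b * (∑ k, g k (pZ p Q2 k))
      ≤ ∑ k, g k (pZ p (a • Q1 + b • Q2) k) := by
    rw [Finset.mul_sum, Finset.mul_sum, ← Finset.sum_add_distrib]
    exact Finset.sum_le_sum fun k _ => hgk k
  simp only [smul_eq_mul, J]
  nlinarith [mul_le_mul_of_nonneg_left hS hβ]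

end Aux

/-- Existence of a deterministic global minimizer. -/
theorem stmt_10 {N M K H : ℕ} (hN : 1 ≤ N) (hK : 1 ≤ K)
    (β : ℝ) (hβ : 0 < β)
    (p : Fin N → Fin M → ℝ) (hp : IsJointDist p)
    (A : Fin K → Fin H → ℝ) (hA : RowStochastic A) (hApos : ∀ k h, 0 < A k h)
    (f : (Fin N → ℝ) → ℝ) (hf : ConcaveOnSimplex f) (hfc : ContinuousOn f (simplex N))
    (g : Fin K → ℝ → ℝ) (hg : ∀ k, ConcaveOn ℝ (Set.Icc (0:ℝ) 1) (g k))
    (hgc : ∀ k, ContinuousOn (g k) (Set.Icc (0:ℝ) 1)) :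
    ∃ Qstar : Fin M → Fin K → ℝ, RowStochastic Qstar ∧ Deterministic Qstar ∧
      ∀ Q : Fin M → Fin K → ℝ, RowStochastic Q → J β f g p A Qstar ≤ J β f g p A Q := by
  classical
  haveI : Nonempty (Fin K) := ⟨⟨0, hK⟩⟩
  -- deterministic quantizers indexed by maps σ : Fin M → Fin K
  set D : (Fin M → Fin K) → Fin M → Fin K → ℝ :=
    fun σ m k => if σ m = k then 1 else 0 with hD_def
  have hDrs : ∀ σ, RowStochastic (D σ) := by
    intro σ
    constructor
    · intro m k; by_cases h : σ m = k <;> simp [hD_def, h]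
    · intro m; simp [hD_def]
  have hDdet : ∀ σ, Deterministic (D σ) := by
    intro σ m
    refine ⟨σ m, by simp [hD_def], ?_⟩
    intro k' hk'
    simp [hD_def, Ne.symm hk']
  obtain ⟨σ0, -, hσ0⟩ := Finset.exists_min_image Finset.univ
    (fun σ => J β f g p A (D σ)) ⟨Classical.arbitrary _, Finset.mem_univ _⟩
  refine ⟨D σ0, hDrs σ0, hDdet σ0, ?_⟩
  intro Q hQ
  set w : (Fin M → Fin K) → ℝ := fun σ => ∏ m, Q m (σ m) with hw_def
  have hw0 : ∀ σ, 0 ≤ w σ := fun σ => Finset.prod_nonneg fun m _ => hQ.1 m (σ m)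
  have hw1 : ∑ σ : (Fin M → Fin K), w σ = 1 := by
    have := (Fintype.prod_sum (fun (m : Fin M) (k : Fin K) => Q m k)).symm
    calc ∑ σ : (Fin M → Fin K), w σ = ∏ m, ∑ k, Q m k := this
      _ = ∏ m : Fin M, (1:ℝ) := by
          apply Finset.prod_congr rfl; intro m _; exact hQ.2 m
      _ = 1 := Finset.prod_const_one
  have hdecomp : ∑ σ : (Fin M → Fin K), w σ • D σ = Q := by
    funext m k
    have happ : (∑ σ : (Fin M → Fin K), w σ • D σ) m k
        = ∑ σ : (Fin M → Fin K), w σ * D σ m k := by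
      rw [Finset.sum_apply, Finset.sum_apply]
      apply Finset.sum_congr rfl
      intro σ _
      simp
    rw [happ]
    -- rewrite each term as a product
    have hterm : ∀ σ : Fin M → Fin K, w σ * D σ m k
        = ∏ m', (fun m' j => if m' = m then (if j = k then Q m' j else 0) else Q m' j)
            m' (σ m') := by
      intro σ
      by_cases hσ : σ m = k
      · have : ∀ m' ∈ Finset.univ,
            (if m' = m then (if σ m' = k then Q m' (σ m') else 0) else Q m' (σ m'))
              = Q m' (σ m') := by
          intro m' _
          by_cases hm : m' = m
          · subst hm; simp [hσ]
          · simp [hm]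
        rw [Finset.prod_congr rfl this]
        simp [hD_def, hσ, hw_def]
      · rw [Finset.prod_eq_zero (Finset.mem_univ m) (by simp [hσ])]
        simp [hD_def, hσ]
    rw [Finset.sum_congr rfl fun σ _ => hterm σ]
    rw [← Fintype.prod_sum
      (fun (m' : Fin M) (j : Fin K) => if m' = m then (if j = k then Q m' j else 0) else Q m' j)]
    have hfac : ∀ m' : Fin M,
        (∑ j, if m' = m then (if j = k then Q m' j else 0) else Q m' j)
          = if m' = m then Q m k else 1 := by
      intro m'
      by_cases hm : m' = m
      · subst hm
        simp [Finset.sum_ite_eq' Finset.univ k (fun j => Q m' j)]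
      · simp [hm, hQ.2 m']
    rw [Finset.prod_congr rfl fun m' _ => hfac m']
    simp
  have hjensen := (J_concaveOn β (le_of_lt hβ) f hf g hg p hp A
      (fun k h => le_of_lt (hApos k h))).le_map_sum
    (t := Finset.univ) (w := w) (p := D)
    (fun σ _ => hw0 σ) hw1 (fun σ _ => hDrs σ)
  rw [hdecomp] at hjensen
  calc J β f g p A (D σ0)
      = ∑ σ : (Fin M → Fin K), w σ * J β f g p A (D σ0) := by
        rw [← Finset.sum_mul, hw1, one_mul]
    _ ≤ ∑ σ : (Fin M → Fin K), w σ * J β f g p A (D σ) :=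
        Finset.sum_le_sum fun σ _ =>
          mul_le_mul_of_nonneg_left (hσ0 σ (Finset.mem_univ σ)) (hw0 σ)
    _ ≤ J β f g p A Q := by simpa using hjensen
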